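/- arXiv:2507.03031 — 5 statements merged into one kernel-verified Lean document; each statement's English description precedes it below -/
import Mathlib

section
/- Let H_1, …, H_N be affine hyperplanes in ℝ^d (each of the form {y ∈ ℝ^d : ⟨u_i, y⟩ = b_i} with u_i ≠ 0). Then the complement ℝ^d \ (H_1 ∪ ⋯ ∪ H_N) has at most ∑_{k=0}^{d} (N choose k) connected components. -/
open scoped RealInnerProductSpace

section Aux

variable {E : Type*} [AddCommGroup E] [Module ℝ E]

/-- Sign vectors realized by the affine functionals `x ↦ L i x - b i` on the coset `x₀ + p`. -/
def sgnSet {N : ℕ} (L : Fin N → E →ₗ[ℝ] ℝ) (b : Fin N → ℝ) (p : Submodule ℝ E) (x₀ : E) :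
    Set (Fin N → Bool) :=
  {ε | ∃ v ∈ p, ∀ i, if ε i then b i < L i (x₀ + v) else L i (x₀ + v) < b i}

lemma pascal_sum (N d : ℕ) :
    ∑ k ∈ Finset.range (d + 1), (N + 1).choose k
      = ∑ k ∈ Finset.range (d + 1), N.choose k + ∑ k ∈ Finset.range d, N.choose k := by
  induction d with
  | zero => simp
  | succ d ih =>
    rw [Finset.sum_range_succ, ih,
        Finset.sum_range_succ (f := fun k => N.choose k) (n := d + 1),
        Finset.sum_range_succ (f := fun k => N.choose k) (n := d)]
    have := Nat.choose_succ_succ N d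
    simp only [Nat.succ_eq_add_one] at this
    omega

set_option maxHeartbeats 1000000 in
lemma sgn_key [FiniteDimensional ℝ E] :
    ∀ (N : ℕ) (d : ℕ) (L : Fin N → E →ₗ[ℝ] ℝ) (b : Fin N → ℝ) (p : Submodule ℝ E) (x₀ : E),
      Module.finrank ℝ p ≤ d →
      (sgnSet L b p x₀).ncard ≤ ∑ k ∈ Finset.range (d + 1), N.choose k := by
  intro N
  induction N with
  | zero =>
    intro d L b p x₀ _
    calc (sgnSet L b p x₀).ncard ≤ (Set.univ : Set (Fin 0 → Bool)).ncard :=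
          Set.ncard_le_ncard (Set.subset_univ _) (Set.toFinite _)
      _ = 1 := by rw [Set.ncard_univ]; simp [Nat.card_eq_fintype_card]
      _ ≤ _ := by
          have h0 : (0 : ℕ) ∈ Finset.range (d + 1) := by simp
          calc 1 = Nat.choose 0 0 := rfl
            _ ≤ _ := Finset.single_le_sum (f := fun k => Nat.choose 0 k)
                (fun _ _ => Nat.zero_le _) h0
  | succ N ih =>
    intro d L b p x₀ hp
    set S : Set (Fin (N + 1) → Bool) := sgnSet L b p x₀ with hS
    set r : (Fin (N + 1) → Bool) → (Fin N → Bool) := fun ε => ε ∘ Fin.castSucc with hr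
    set S₁ : Set (Fin (N + 1) → Bool) :=
      {ε | ε ∈ S ∧ (ε (Fin.last N) = false ∨ Function.update ε (Fin.last N) false ∉ S)} with hS₁
    set S₂ : Set (Fin (N + 1) → Bool) :=
      {ε | ε ∈ S ∧ ε (Fin.last N) = true ∧ Function.update ε (Fin.last N) false ∈ S} with hS₂
    have hext : ∀ ε ε' : Fin (N + 1) → Bool,
        r ε = r ε' → ε (Fin.last N) = ε' (Fin.last N) → ε = ε' := by
      intro ε ε' h hl
      funext i
      refine Fin.lastCases hl (fun j => congrFun h j) i
    have hupdate_r : ∀ ε : Fin (N + 1) → Bool,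
        r (Function.update ε (Fin.last N) false) = r ε := by
      intro ε
      funext j
      exact Function.update_of_ne (Fin.castSucc_lt_last j).ne _ _
    have hSsub : S ⊆ S₁ ∪ S₂ := by
      intro ε hε
      by_cases h1 : ε (Fin.last N) = true
      · by_cases h2 : Function.update ε (Fin.last N) false ∈ S
        · exact Or.inr ⟨hε, h1, h2⟩
        · exact Or.inl ⟨hε, Or.inr h2⟩
      · exact Or.inl ⟨hε, Or.inl (Bool.eq_false_iff.mpr h1)⟩
    have hmix : ∀ ε ε' : Fin (N + 1) → Bool, ε ∈ S →
        (ε (Fin.last N) = false ∨ Function.update ε (Fin.last N) false ∉ S) →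
        ε' ∈ S → ε (Fin.last N) = true → ε' (Fin.last N) = false → r ε = r ε' → False := by
      intro ε ε' hεS hε1 hε'S ht hf h
      have heq : Function.update ε (Fin.last N) false = ε' := by
        apply hext
        · rw [hupdate_r]; exact h
        · rw [Function.update_self, hf]
      rcases hε1 with h' | h'
      · rw [ht] at h'; exact Bool.false_ne_true h'.symm
      · exact h' (heq ▸ hε'S)
    have hinj1 : Set.InjOn r S₁ := by
      intro ε hε ε' hε' h
      obtain ⟨hεS, hε1⟩ := hε
      obtain ⟨hε'S, hε'1⟩ := hε'
      cases h1 : ε (Fin.last N) <;> cases h2 : ε' (Fin.last N)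
      · exact hext _ _ h (h1.trans h2.symm)
      · exact (hmix ε' ε hε'S hε'1 hεS h2 h1 h.symm).elim
      · exact (hmix ε ε' hεS hε1 hε'S h1 h2 h).elim
      · exact hext _ _ h (h1.trans h2.symm)
    have hinj2 : Set.InjOn r S₂ := fun ε hε ε' hε' h =>
      hext _ _ h (hε.2.1.trans hε'.2.1.symm)
    set S' : Set (Fin N → Bool) :=
      sgnSet (fun i => L i.castSucc) (fun i => b i.castSucc) p x₀ with hS'
    have hrS : ∀ ε ∈ S, r ε ∈ S' := by
      rintro ε ⟨v, hv, hcond⟩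
      exact ⟨v, hv, fun i => hcond i.castSucc⟩
    have hS1card : S₁.ncard ≤ ∑ k ∈ Finset.range (d + 1), N.choose k := by
      have h2 : r '' S₁ ⊆ S' := by rintro - ⟨ε, hε, rfl⟩; exact hrS ε hε.1
      calc S₁.ncard = (r '' S₁).ncard := (Set.ncard_image_of_injOn hinj1).symm
        _ ≤ S'.ncard := Set.ncard_le_ncard h2 (Set.toFinite _)
        _ ≤ _ := ih d _ _ p x₀ hp
    have hS2card : S₂.ncard ≤ ∑ k ∈ Finset.range d, N.choose k := by
      obtain h | ⟨ε₀, hε₀⟩ := S₂.eq_empty_or_nonempty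
      · simp [h]
      obtain ⟨hε₀S, hlast₀, hup₀⟩ := hε₀
      obtain ⟨vP, hvP, hcP⟩ := hε₀S
      obtain ⟨vM, hvM, hcM⟩ := hup₀
      set l := L (Fin.last N) with hl
      set β := b (Fin.last N) with hβ
      have haP : β < l (x₀ + vP) := by
        have := hcP (Fin.last N); rw [hlast₀] at this; simpa using this
      have haM : l (x₀ + vM) < β := by
        have := hcM (Fin.last N); rw [Function.update_self] at this; simpa using this
      -- the key interpolation construction
      have hkey : ∀ wP ∈ p, ∀ wM ∈ p, β < l (x₀ + wP) → l (x₀ + wM) < β →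
          ∃ w ∈ p, l (x₀ + w) = β ∧
            ∀ (g : E →ₗ[ℝ] ℝ) (c : ℝ),
              ((c < g (x₀ + wM) → c < g (x₀ + wP) → c < g (x₀ + w)) ∧
               (g (x₀ + wM) < c → g (x₀ + wP) < c → g (x₀ + w) < c)) := by
        intro wP hwP wM hwM hP hM
        have hden : (0 : ℝ) < l (x₀ + wP) - l (x₀ + wM) := by linarith
        set t : ℝ := (β - l (x₀ + wM)) / (l (x₀ + wP) - l (x₀ + wM)) with htdef
        have ht0 : 0 ≤ t := div_nonneg (by linarith) (le_of_lt hden)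
        have ht1 : t ≤ 1 := by rw [div_le_one hden]; linarith
        refine ⟨wM + t • (wP - wM), p.add_mem hwM (p.smul_mem _ (p.sub_mem hwP hwM)), ?_, ?_⟩
        · have hval : l (x₀ + (wM + t • (wP - wM)))
              = l (x₀ + wM) + t * (l (x₀ + wP) - l (x₀ + wM)) := by
            simp only [map_add, map_smul, map_sub, smul_eq_mul]; ring
          have hne : l (x₀ + wP) - l (x₀ + wM) ≠ 0 := ne_of_gt hden
          rw [hval, htdef, div_mul_cancel₀ _ hne]
          ring
        · intro g c
          have hg : g (x₀ + (wM + t • (wP - wM)))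
              = g (x₀ + wM) + t * (g (x₀ + wP) - g (x₀ + wM)) := by
            simp only [map_add, map_smul, map_sub, smul_eq_mul]; ring
          constructor
          · intro h1 h2
            rw [hg]
            nlinarith [mul_nonneg ht0 (by linarith : (0:ℝ) ≤ g (x₀ + wP) - c),
              mul_nonneg (by linarith : (0:ℝ) ≤ 1 - t) (by linarith : (0:ℝ) ≤ g (x₀ + wM) - c)]
          · intro h1 h2
            rw [hg]
            nlinarith [mul_nonneg ht0 (by linarith : (0:ℝ) ≤ c - g (x₀ + wP)),
              mul_nonneg (by linarith : (0:ℝ) ≤ 1 - t) (by linarith : (0:ℝ) ≤ c - g (x₀ + wM))]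
      -- rank drop
      have hne : vP - vM ∉ LinearMap.ker l := by
        simp only [LinearMap.mem_ker, map_sub]
        have hdiff : l vP - l vM = l (x₀ + vP) - l (x₀ + vM) := by
          simp only [map_add]; ring
        intro h0
        rw [hdiff] at h0
        linarith
      set q := p ⊓ LinearMap.ker l with hqdef
      have hqlt : q < p := by
        refine lt_of_le_of_ne inf_le_left fun h => hne ?_
        have hm : vP - vM ∈ p := p.sub_mem hvP hvM
        rw [← h] at hm
        exact hm.2
      have hrk : Module.finrank ℝ q < Module.finrank ℝ p :=
        Submodule.finrank_lt_finrank_of_lt hqlt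
      have hd1 : 1 ≤ d := by omega
      have hqd : Module.finrank ℝ q ≤ d - 1 := by omega
      obtain ⟨w₀, hw₀p, hw₀l, -⟩ := hkey vP hvP vM hvM haP haM
      set y₀ := x₀ + w₀ with hy₀
      set S'' : Set (Fin N → Bool) :=
        sgnSet (fun i => L i.castSucc) (fun i => b i.castSucc) q y₀ with hS''
      have hT : r '' S₂ ⊆ S'' := by
        rintro - ⟨ε, ⟨hεS, hεt, hεu⟩, rfl⟩
        obtain ⟨aP, haPp, hcP'⟩ := hεS
        obtain ⟨aM, haMp, hcM'⟩ := hεu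
        have hP : β < l (x₀ + aP) := by
          have := hcP' (Fin.last N); rw [hεt] at this; simpa using this
        have hM : l (x₀ + aM) < β := by
          have := hcM' (Fin.last N); rw [Function.update_self] at this; simpa using this
        obtain ⟨w, hwp, hwl, hbound⟩ := hkey aP haPp aM haMp hP hM
        refine ⟨(x₀ + w) - y₀, ⟨?_, ?_⟩, ?_⟩
        · have heq : (x₀ + w) - y₀ = w - w₀ := by rw [hy₀]; abel
          rw [heq]; exact p.sub_mem hwp hw₀p
        · have heq : l ((x₀ + w) - y₀) = l (x₀ + w) - l (x₀ + w₀) := by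
            rw [hy₀, map_sub]
          have hz : l ((x₀ + w) - y₀) = 0 := by rw [heq, hwl, hw₀l, sub_self]
          exact hz
        · intro i
          have hyeq : y₀ + ((x₀ + w) - y₀) = x₀ + w := by abel
          rw [hyeq]
          have hcPi := hcP' i.castSucc
          have hcMi := hcM' i.castSucc
          rw [Function.update_of_ne (Fin.castSucc_lt_last i).ne] at hcMi
          show if ε i.castSucc then b i.castSucc < L i.castSucc (x₀ + w)
            else L i.castSucc (x₀ + w) < b i.castSucc
          cases hb : ε i.castSucc
          · rw [hb] at hcPi hcMi
            simp only [Bool.false_eq_true, if_false] at hcPi hcMi ⊢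
            exact (hbound _ _).2 hcMi hcPi
          · rw [hb] at hcPi hcMi
            simp only [if_true] at hcPi hcMi ⊢
            exact (hbound _ _).1 hcMi hcPi
      calc S₂.ncard = (r '' S₂).ncard := (Set.ncard_image_of_injOn hinj2).symm
        _ ≤ S''.ncard := Set.ncard_le_ncard hT (Set.toFinite _)
        _ ≤ ∑ k ∈ Finset.range ((d - 1) + 1), N.choose k := ih (d - 1) _ _ q y₀ hqd
        _ = ∑ k ∈ Finset.range d, N.choose k := by rw [Nat.sub_add_cancel hd1]
    calc S.ncard ≤ (S₁ ∪ S₂).ncard := Set.ncard_le_ncard hSsub (Set.toFinite _)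
      _ ≤ S₁.ncard + S₂.ncard := Set.ncard_union_le _ _
      _ ≤ ∑ k ∈ Finset.range (d + 1), N.choose k + ∑ k ∈ Finset.range d, N.choose k :=
          add_le_add hS1card hS2card
      _ = _ := (pascal_sum N d).symm

end Aux

set_option maxHeartbeats 1000000 in
/-- The complement of `N` affine hyperplanes in `ℝ^d` has at most
`∑_{k=0}^{d} (N choose k)` connected components. -/
theorem hyperplane_arrangement_region_count
    (d N : ℕ) (hd : 1 ≤ d)
    (u : Fin N → EuclideanSpace ℝ (Fin d)) (hu : ∀ i, u i ≠ 0)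
    (b : Fin N → ℝ) :
    Finite (ConnectedComponents {x : EuclideanSpace ℝ (Fin d) | ∀ i, ⟪u i, x⟫ ≠ b i}) ∧
      Nat.card (ConnectedComponents {x : EuclideanSpace ℝ (Fin d) | ∀ i, ⟪u i, x⟫ ≠ b i}) ≤
        ∑ k ∈ Finset.range (d + 1), N.choose k := by
  set U : Set (EuclideanSpace ℝ (Fin d)) := {x | ∀ i, ⟪u i, x⟫ ≠ b i} with hU
  set L : Fin N → (EuclideanSpace ℝ (Fin d)) →ₗ[ℝ] ℝ := fun i =>
    { toFun := fun x => ⟪u i, x⟫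
      map_add' := fun x y => inner_add_right _ _ _
      map_smul' := fun c x => by
        simp only [RingHom.id_apply, smul_eq_mul]
        exact real_inner_smul_right _ _ _ } with hL
  set S : Set (Fin N → Bool) := sgnSet L b ⊤ 0 with hSdef
  set cell : (Fin N → Bool) → Set (EuclideanSpace ℝ (Fin d)) := fun ε =>
    {y | ∀ i, if ε i then b i < ⟪u i, y⟫ else ⟪u i, y⟫ < b i} with hcell
  have hcell_sub : ∀ ε, cell ε ⊆ U := by
    intro ε y hy i
    have := hy i
    split_ifs at this
    · exact ne_of_gt this
    · exact ne_of_lt this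
  have hconv : ∀ ε, Convex ℝ (cell ε) := by
    intro ε
    have heq : cell ε = ⋂ i, {y : (EuclideanSpace ℝ (Fin d)) | if ε i then b i < ⟪u i, y⟫ else ⟪u i, y⟫ < b i} := by
      ext y; simp [hcell, Set.mem_iInter]
    rw [heq]
    refine convex_iInter fun i => ?_
    have hlin : IsLinearMap ℝ (fun y : (EuclideanSpace ℝ (Fin d)) => ⟪u i, y⟫) :=
      ⟨fun x y => inner_add_right _ _ _, fun c x => real_inner_smul_right _ _ _⟩
    cases hb : ε i
    · simp only [hb, Bool.false_eq_true, if_false]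
      exact convex_halfSpace_lt hlin _
    · simp only [hb, if_true]
      exact convex_halfSpace_gt hlin _
  -- two points in the same cell lie in the same connected component of U
  have samecomp : ∀ (ε : Fin N → Bool) (a c : U), (a : (EuclideanSpace ℝ (Fin d))) ∈ cell ε → (c : (EuclideanSpace ℝ (Fin d))) ∈ cell ε →
      (ConnectedComponents.mk a = ConnectedComponents.mk c) := by
    intro ε a c ha hc
    set C' : Set U := Subtype.val ⁻¹' cell ε with hC'
    have himg : Subtype.val '' C' = cell ε := by
      rw [hC', Subtype.image_preimage_coe]
      exact Set.inter_eq_right.mpr (hcell_sub ε)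
    have hpre : IsPreconnected C' := by
      rw [← Topology.IsInducing.subtypeVal.isPreconnected_image, himg]
      exact (hconv ε).isPreconnected
    have hmem : (c : U) ∈ connectedComponent a :=
      hpre.subset_connectedComponent ha hc
    exact ConnectedComponents.coe_eq_coe.mpr (connectedComponent_eq hmem)
  have hσcell : ∀ x : U, (x : (EuclideanSpace ℝ (Fin d))) ∈ cell (fun i => decide (b i < ⟪u i, (x : (EuclideanSpace ℝ (Fin d)))⟫)) := by
    intro x
    simp only [hcell, Set.mem_setOf_eq]
    intro i
    by_cases h : b i < ⟪u i, (x : (EuclideanSpace ℝ (Fin d)))⟫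
    · rw [if_pos (decide_eq_true h)]
      exact h
    · rw [if_neg (by simpa using h)]
      exact lt_of_le_of_ne (not_lt.mp h) (x.2 i)
  have hcell_iff_S : ∀ ε (y : (EuclideanSpace ℝ (Fin d))), y ∈ cell ε → ε ∈ S := by
    intro ε y hy
    refine ⟨y, Submodule.mem_top, fun i => ?_⟩
    have := hy i
    simpa [hL] using this
  have hwit : ∀ ε ∈ S, ∃ x : U, (x : (EuclideanSpace ℝ (Fin d))) ∈ cell ε := by
    rintro ε ⟨v, -, hv⟩
    have hc : (0 + v : (EuclideanSpace ℝ (Fin d))) ∈ cell ε := by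
      intro i
      have := hv i
      simpa [hL] using this
    exact ⟨⟨0 + v, hcell_sub ε hc⟩, hc⟩
  choose pt hpt using hwit
  set φ : S → ConnectedComponents U := fun e => ConnectedComponents.mk (pt e.1 e.2) with hφ
  have hsurj : Function.Surjective φ := by
    intro c
    obtain ⟨x, rfl⟩ := ConnectedComponents.surjective_coe c
    refine ⟨⟨fun i => decide (b i < ⟪u i, (x : (EuclideanSpace ℝ (Fin d)))⟫), hcell_iff_S _ _ (hσcell x)⟩, ?_⟩
    exact samecomp _ _ _ (hpt _ _) (hσcell x)
  have hfinS : Finite S := Set.Finite.to_subtype (Set.toFinite S)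
  constructor
  · exact Finite.of_surjective φ hsurj
  · have hrank : Module.finrank ℝ (⊤ : Submodule ℝ (EuclideanSpace ℝ (Fin d))) ≤ d := by
      rw [finrank_top, finrank_euclideanSpace_fin]
    calc Nat.card (ConnectedComponents U) ≤ Nat.card S :=
          Nat.card_le_card_of_surjective φ hsurj
      _ = S.ncard := Nat.card_coe_set_eq S
      _ ≤ _ := sgn_key N d L b ⊤ 0 hrank
end

section
/- Fix d ≥ 1, R > 0, 0 < δ ≤ R, unit vectors u_1, …, u_N ∈ ℝ^d, and a point x ∈ ℝ^d with ‖x‖ ≤ R. Let b_1, …, b_N be independent random variables, each uniformly distributed on [−R, R], and let H_i = {y : ⟨u_i, y⟩ = b_i}. Then the probability that dist(x, H_i) > δ for every i = 1, …, N is at most (1 − δ/(2R))^N ≤ exp(−Nδ/(2R)). -/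
open scoped RealInnerProductSpace
open MeasureTheory

lemma infDist_hyperplane_le {d : ℕ} (u x : EuclideanSpace ℝ (Fin d)) (hu : ‖u‖ = 1) (b : ℝ) :
    Metric.infDist x {y : EuclideanSpace ℝ (Fin d) | ⟪u, y⟫ = b} ≤ |⟪u, x⟫ - b| := by
  have huu : ⟪u, u⟫ = (1 : ℝ) := by
    rw [real_inner_self_eq_norm_sq, hu]; norm_num
  have hmem : (x - (⟪u, x⟫ - b) • u) ∈ {y : EuclideanSpace ℝ (Fin d) | ⟪u, y⟫ = b} := by
    rw [Set.mem_setOf_eq, inner_sub_right, inner_smul_right, huu]; ring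
  calc Metric.infDist x {y : EuclideanSpace ℝ (Fin d) | ⟪u, y⟫ = b}
      ≤ dist x (x - (⟪u, x⟫ - b) • u) := Metric.infDist_le_dist_of_mem hmem
    _ = |⟪u, x⟫ - b| := by
        rw [dist_eq_norm]
        simp [norm_smul, hu, Real.norm_eq_abs]

lemma coord_bound (R δ a : ℝ) (hR : 0 < R) (hδ : 0 < δ) (hδR : δ ≤ R) (ha : |a| ≤ R) :
    ((ENNReal.ofReal (2 * R))⁻¹ • volume.restrict (Set.Icc (-R) R))
      {c : ℝ | δ < |a - c|} ≤ ENNReal.ofReal (1 - δ / (2 * R)) := by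
  have hS : MeasurableSet {c : ℝ | δ < |a - c|} := by
    apply measurableSet_lt measurable_const
    exact (measurable_const.sub measurable_id).abs
  have ha' := abs_le.mp ha
  -- the bad set inside [-R,R] misses the interval [a-δ, a+δ] ∩ [-R,R]
  have hsub : {c : ℝ | δ < |a - c|} ∩ Set.Icc (-R) R ⊆
      Set.Icc (-R) R \ Set.Icc (a - δ) (a + δ) := by
    rintro c ⟨hc, hcI⟩
    refine ⟨hcI, fun hc' => ?_⟩
    rw [Set.mem_Icc] at hc'
    have : |a - c| ≤ δ := abs_le.mpr ⟨by linarith [hc'.2], by linarith [hc'.1]⟩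
    exact absurd this (not_le.mpr hc)
  have hIB : MeasurableSet (Set.Icc (a - δ) (a + δ)) := measurableSet_Icc
  have hvol_inter : ENNReal.ofReal δ ≤ volume (Set.Icc (-R) R ∩ Set.Icc (a - δ) (a + δ)) := by
    rw [Set.Icc_inter_Icc, Real.volume_Icc]
    apply ENNReal.ofReal_le_ofReal
    rcases min_cases R (a + δ) with ⟨h1, h1'⟩ | ⟨h1, h1'⟩ <;>
      rcases max_cases (-R) (a - δ) with ⟨h2, h2'⟩ | ⟨h2, h2'⟩ <;>
      rw [h1, h2] <;> linarith
  have hvol_diff : volume (Set.Icc (-R) R \ Set.Icc (a - δ) (a + δ)) ≤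
      ENNReal.ofReal (2 * R - δ) := by
    have heq : Set.Icc (-R) R \ Set.Icc (a - δ) (a + δ) =
        Set.Icc (-R) R \ (Set.Icc (-R) R ∩ Set.Icc (a - δ) (a + δ)) := by
      rw [Set.diff_self_inter]
    rw [heq]
    have hfin : volume (Set.Icc (-R) R ∩ Set.Icc (a - δ) (a + δ)) ≠ ⊤ :=
      ((measure_mono Set.inter_subset_left).trans_lt (by
        rw [Real.volume_Icc]; exact ENNReal.ofReal_lt_top)).ne
    rw [measure_diff Set.inter_subset_left (measurableSet_Icc.inter hIB).nullMeasurableSet hfin,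
      Real.volume_Icc]
    calc ENNReal.ofReal (R - (-R)) - volume (Set.Icc (-R) R ∩ Set.Icc (a - δ) (a + δ))
        ≤ ENNReal.ofReal (R - (-R)) - ENNReal.ofReal δ :=
          tsub_le_tsub_left hvol_inter _
      _ = ENNReal.ofReal (R - (-R) - δ) := by
          rw [← ENNReal.ofReal_sub _ hδ.le]
      _ = ENNReal.ofReal (2 * R - δ) := by ring_nf
  rw [Measure.smul_apply, smul_eq_mul, Measure.restrict_apply hS]
  calc (ENNReal.ofReal (2 * R))⁻¹ * volume ({c : ℝ | δ < |a - c|} ∩ Set.Icc (-R) R)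
      ≤ (ENNReal.ofReal (2 * R))⁻¹ * ENNReal.ofReal (2 * R - δ) := by
        exact mul_le_mul_right ((measure_mono hsub).trans hvol_diff) _
    _ = ENNReal.ofReal (2 * R - δ) / ENNReal.ofReal (2 * R) := by
        rw [ENNReal.div_eq_inv_mul]
    _ = ENNReal.ofReal ((2 * R - δ) / (2 * R)) := by
        rw [ENNReal.ofReal_div_of_pos (by linarith)]
    _ = ENNReal.ofReal (1 - δ / (2 * R)) := by
        congr 1; field_simp

/-- If the biases `b i` are independent and uniform on `[-R, R]`, the probability
that a fixed point `x` in the ball of radius `R` stays at distance more than `δ`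
from every random hyperplane `{y : ⟪u i, y⟫ = b i}` is at most
`(1 − δ/(2R))^N ≤ exp(−Nδ/(2R))`. -/
theorem random_hyperplanes_safe_probability_bound
    (d N : ℕ) (hd : 1 ≤ d)
    (R δ : ℝ) (hR : 0 < R) (hδ : 0 < δ) (hδR : δ ≤ R)
    (u : Fin N → EuclideanSpace ℝ (Fin d)) (hu : ∀ i, ‖u i‖ = 1)
    (x : EuclideanSpace ℝ (Fin d)) (hx : ‖x‖ ≤ R) :
    (Measure.pi (fun _ : Fin N =>
        (ENNReal.ofReal (2 * R))⁻¹ • volume.restrict (Set.Icc (-R) R)))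
        {b : Fin N → ℝ | ∀ i,
          δ < Metric.infDist x {y : EuclideanSpace ℝ (Fin d) | ⟪u i, y⟫ = b i}} ≤
      ENNReal.ofReal ((1 - δ / (2 * R)) ^ N) ∧
    (1 - δ / (2 * R)) ^ N ≤ Real.exp (-(N * δ / (2 * R))) := by
  have hfrac0 : 0 ≤ 1 - δ / (2 * R) := by
    have : δ / (2 * R) ≤ 1 := by
      rw [div_le_one (by linarith)]; linarith
    linarith
  constructor
  · set μ : Fin N → Measure ℝ :=
      fun _ => (ENNReal.ofReal (2 * R))⁻¹ • volume.restrict (Set.Icc (-R) R) with hμ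
    have hfin : ∀ i : Fin N, SigmaFinite (μ i) := fun i => by
      haveI : IsFiniteMeasure (μ i) := by
        constructor
        rw [hμ, Measure.smul_apply, smul_eq_mul]
        exact ENNReal.mul_lt_top (ENNReal.inv_lt_top.mpr (by simp; linarith)) (by
          rw [Measure.restrict_apply_univ, Real.volume_Icc]; exact ENNReal.ofReal_lt_top)
      infer_instance
    set T : Fin N → Set ℝ := fun i => {c : ℝ | δ < |⟪u i, x⟫ - c|} with hT
    have hsub : {b : Fin N → ℝ | ∀ i,
        δ < Metric.infDist x {y : EuclideanSpace ℝ (Fin d) | ⟪u i, y⟫ = b i}} ⊆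
        Set.pi Set.univ T := by
      intro b hb i _
      exact lt_of_lt_of_le (hb i) (infDist_hyperplane_le (u i) x (hu i) (b i))
    calc Measure.pi μ {b : Fin N → ℝ | ∀ i,
          δ < Metric.infDist x {y : EuclideanSpace ℝ (Fin d) | ⟪u i, y⟫ = b i}}
        ≤ Measure.pi μ (Set.pi Set.univ T) := measure_mono hsub
      _ = ∏ i : Fin N, μ i (T i) := @Measure.pi_pi (Fin N) (fun _ => ℝ) _ _ μ hfin T
      _ ≤ ∏ _i : Fin N, ENNReal.ofReal (1 - δ / (2 * R)) := by
          apply Finset.prod_le_prod' 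
          intro i _
          exact coord_bound R δ (⟪u i, x⟫) hR hδ hδR
            (by
              calc |⟪u i, x⟫| ≤ ‖u i‖ * ‖x‖ := abs_real_inner_le_norm _ _
                _ ≤ R := by rw [hu i, one_mul]; exact hx)
      _ = ENNReal.ofReal ((1 - δ / (2 * R)) ^ N) := by
          rw [Finset.prod_const, Finset.card_univ, Fintype.card_fin,
            ENNReal.ofReal_pow hfrac0]
  · have h1 : 1 - δ / (2 * R) ≤ Real.exp (-(δ / (2 * R))) := by
      linarith [Real.add_one_le_exp (-(δ / (2 * R)))]
    calc (1 - δ / (2 * R)) ^ N ≤ (Real.exp (-(δ / (2 * R)))) ^ N :=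
          pow_le_pow_left₀ hfrac0 h1 N
      _ = Real.exp (-(N * δ / (2 * R))) := by
          rw [← Real.exp_nat_mul]; congr 1; ring
end

section
/- Fix d ≥ 1, R > 0, 0 < δ ≤ R, and unit vectors u_1, …, u_N ∈ ℝ^d. Let b_1, …, b_N be independent random variables, each uniformly distributed on [−R, R], and let H_i = {y : ⟨u_i, y⟩ = b_i}. Then the expected Lebesgue measure of the catastrophic set {x : ‖x‖ ≤ R and dist(x, H_i) ≤ δ for some i} is at least ω_d R^d · (1 − exp(−Nδ/(2R))), where ω_d is the measure of the unit ball in ℝ^d. -/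
open scoped RealInnerProductSpace
open MeasureTheory

lemma infDist_hyperplane {d : ℕ} (u : EuclideanSpace ℝ (Fin d)) (hu : ‖u‖ = 1)
    (c : ℝ) (x : EuclideanSpace ℝ (Fin d)) :
    Metric.infDist x {y : EuclideanSpace ℝ (Fin d) | ⟪u, y⟫ = c} = |⟪u, x⟫ - c| := by
  have huu : ⟪u, u⟫ = 1 := by
    rw [real_inner_self_eq_norm_sq, hu]; norm_num
  have hy₀mem : x - (⟪u, x⟫ - c) • u ∈ {y : EuclideanSpace ℝ (Fin d) | ⟪u, y⟫ = c} := by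
    show ⟪u, x - (⟪u, x⟫ - c) • u⟫ = c
    rw [inner_sub_right, real_inner_smul_right, huu]; ring
  refine le_antisymm ?_ ?_
  · refine le_trans (Metric.infDist_le_dist_of_mem hy₀mem) ?_
    rw [dist_eq_norm]
    simp [norm_smul, hu]
  · have hne : Nonempty {y : EuclideanSpace ℝ (Fin d) | ⟪u, y⟫ = c} := ⟨_, hy₀mem⟩
    rw [Metric.infDist_eq_iInf]
    refine le_ciInf fun y => ?_
    have hy : (y : EuclideanSpace ℝ (Fin d)) ∈ {y : EuclideanSpace ℝ (Fin d) | ⟪u, y⟫ = c} := y.2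
    have hy' : ⟪u, (y : EuclideanSpace ℝ (Fin d))⟫ = c := hy
    have h1 : ⟪u, x⟫ - c = ⟪u, x - (y : EuclideanSpace ℝ (Fin d))⟫ := by
      rw [inner_sub_right, hy']
    rw [h1, dist_eq_norm]
    calc |⟪u, x - (y : EuclideanSpace ℝ (Fin d))⟫| ≤ ‖u‖ * ‖x - y‖ := abs_real_inner_le_norm u (x - y)
      _ = ‖x - y‖ := by rw [hu, one_mul]

lemma slab_measure_le {R δ : ℝ} (hR : 0 < R) (hδ : 0 < δ) (hδR : δ ≤ R)
    (c : ℝ) (hc : |c| ≤ R) :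
    ((ENNReal.ofReal (2 * R))⁻¹ • volume.restrict (Set.Icc (-R) R))
      {t : ℝ | δ < |c - t|} ≤ ENNReal.ofReal (1 - δ / (2 * R)) := by
  have h2R : (0:ℝ) < 2 * R := by linarith
  have habs : ∀ t : ℝ, |c - t| ≤ δ ↔ t ∈ Set.Icc (c - δ) (c + δ) := by
    intro t
    rw [abs_le, Set.mem_Icc]
    constructor <;> intro h <;> exact ⟨by linarith [h.1, h.2], by linarith [h.1, h.2]⟩
  have hcompl : {t : ℝ | δ < |c - t|} = (Set.Icc (c - δ) (c + δ))ᶜ := by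
    ext t
    simp only [Set.mem_setOf_eq, Set.mem_compl_iff, ← habs t, not_le]
  have hms : MeasurableSet {t : ℝ | δ < |c - t|} := by
    rw [hcompl]; exact measurableSet_Icc.compl
  rw [Measure.smul_apply, Measure.restrict_apply hms, smul_eq_mul, hcompl]
  have hseteq : (Set.Icc (c - δ) (c + δ))ᶜ ∩ Set.Icc (-R) R
      = Set.Icc (-R) R \ (Set.Icc (c - δ) (c + δ) ∩ Set.Icc (-R) R) := by
    ext t; simp only [Set.mem_inter_iff, Set.mem_compl_iff, Set.mem_diff]; tauto
  rw [hseteq]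
  have hvolB : volume (Set.Icc (-R) R) = ENNReal.ofReal (2 * R) := by
    rw [Real.volume_Icc]; ring_nf
  have hinter_le : ENNReal.ofReal δ ≤ volume (Set.Icc (c - δ) (c + δ) ∩ Set.Icc (-R) R) := by
    rw [Set.Icc_inter_Icc, Real.volume_Icc]
    apply ENNReal.ofReal_le_ofReal
    rcases abs_le.mp hc with ⟨h1, h2⟩
    rcases max_cases (c - δ) (-R) with ⟨h, _⟩ | ⟨h, _⟩ <;>
      rcases min_cases (c + δ) R with ⟨h', _⟩ | ⟨h', _⟩ <;> rw [h, h'] <;> linarith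
  have hdiff : volume (Set.Icc (-R) R \ (Set.Icc (c - δ) (c + δ) ∩ Set.Icc (-R) R))
      ≤ ENNReal.ofReal (2 * R - δ) := by
    rw [measure_diff Set.inter_subset_right
      (measurableSet_Icc.inter measurableSet_Icc).nullMeasurableSet
      (lt_of_le_of_lt (measure_mono Set.inter_subset_right)
        (by rw [hvolB]; exact ENNReal.ofReal_lt_top)).ne, hvolB]
    calc ENNReal.ofReal (2 * R) - volume (Set.Icc (c - δ) (c + δ) ∩ Set.Icc (-R) R)
        ≤ ENNReal.ofReal (2 * R) - ENNReal.ofReal δ := tsub_le_tsub_left hinter_le _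
      _ = ENNReal.ofReal (2 * R - δ) := (ENNReal.ofReal_sub _ hδ.le).symm
  calc (ENNReal.ofReal (2 * R))⁻¹ * volume (Set.Icc (-R) R \ (Set.Icc (c - δ) (c + δ) ∩ Set.Icc (-R) R))
      ≤ (ENNReal.ofReal (2 * R))⁻¹ * ENNReal.ofReal (2 * R - δ) := by
        exact mul_le_mul_right hdiff _
    _ = ENNReal.ofReal (2 * R - δ) / ENNReal.ofReal (2 * R) := by
        rw [ENNReal.div_eq_inv_mul]
    _ = ENNReal.ofReal ((2 * R - δ) / (2 * R)) := (ENNReal.ofReal_div_of_pos h2R).symm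
    _ = ENNReal.ofReal (1 - δ / (2 * R)) := by rw [sub_div, div_self h2R.ne']

/-- If the biases `b i` are independent and uniform on `[-R, R]`, the expected
volume of the catastrophic set (points of the ball of radius `R` within distance
`δ` of some random hyperplane) is at least `ω_d R^d (1 − exp(−Nδ/(2R)))`. -/
theorem expected_catastrophic_volume_lower_bound
    (d N : ℕ) (hd : 1 ≤ d)
    (R δ : ℝ) (hR : 0 < R) (hδ : 0 < δ) (hδR : δ ≤ R)
    (u : Fin N → EuclideanSpace ℝ (Fin d)) (hu : ∀ i, ‖u i‖ = 1) :
    volume (Metric.ball (0 : EuclideanSpace ℝ (Fin d)) 1) * ENNReal.ofReal (R ^ d) *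
        ENNReal.ofReal (1 - Real.exp (-(N * δ / (2 * R)))) ≤
      ∫⁻ b in Set.univ,
        volume {x : EuclideanSpace ℝ (Fin d) | ‖x‖ ≤ R ∧ ∃ i,
          Metric.infDist x {y : EuclideanSpace ℝ (Fin d) | ⟪u i, y⟫ = b i} ≤ δ}
        ∂(Measure.pi (fun _ : Fin N =>
            (ENNReal.ofReal (2 * R))⁻¹ • volume.restrict (Set.Icc (-R) R))) := by
  classical
  have h2R : (0:ℝ) < 2 * R := by linarith
  set μ1 : Measure ℝ := (ENNReal.ofReal (2 * R))⁻¹ • volume.restrict (Set.Icc (-R) R) with hμ1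
  haveI hμ1prob : IsProbabilityMeasure μ1 := by
    constructor
    rw [hμ1, Measure.smul_apply, Measure.restrict_apply MeasurableSet.univ, Set.univ_inter,
      Real.volume_Icc, smul_eq_mul, show R - (-R) = 2 * R by ring]
    exact ENNReal.inv_mul_cancel (ENNReal.ofReal_pos.mpr h2R).ne' ENNReal.ofReal_ne_top
  set μ : Measure (Fin N → ℝ) := Measure.pi (fun _ : Fin N => μ1) with hμ
  haveI hμprob : IsProbabilityMeasure μ := inferInstance
  set S : Set ((Fin N → ℝ) × EuclideanSpace ℝ (Fin d)) :=
    {p | ‖p.2‖ ≤ R ∧ ∃ i, |⟪u i, p.2⟫ - p.1 i| ≤ δ} with hSdef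
  have hS : MeasurableSet S := by
    have h1 : MeasurableSet {p : (Fin N → ℝ) × EuclideanSpace ℝ (Fin d) | ‖p.2‖ ≤ R} :=
      measurableSet_le measurable_snd.norm measurable_const
    have h2 : ∀ i : Fin N, MeasurableSet
        {p : (Fin N → ℝ) × EuclideanSpace ℝ (Fin d) | |⟪u i, p.2⟫ - p.1 i| ≤ δ} := by
      intro i
      have hinner : Measurable fun p : (Fin N → ℝ) × EuclideanSpace ℝ (Fin d) => ⟪u i, p.2⟫ :=
        (Continuous.inner continuous_const continuous_snd).measurable
      exact measurableSet_le ((hinner.sub ((measurable_pi_apply i).comp measurable_fst)).abs)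
        measurable_const
    have : S = {p : (Fin N → ℝ) × EuclideanSpace ℝ (Fin d) | ‖p.2‖ ≤ R} ∩
        ⋃ i, {p : (Fin N → ℝ) × EuclideanSpace ℝ (Fin d) | |⟪u i, p.2⟫ - p.1 i| ≤ δ} := by
      ext p; simp [hSdef, Set.mem_iUnion]
    rw [this]
    exact h1.inter (MeasurableSet.iUnion h2)
  rw [setLIntegral_univ]
  have hcongr : ∀ b : Fin N → ℝ,
      volume {x : EuclideanSpace ℝ (Fin d) | ‖x‖ ≤ R ∧ ∃ i,
        Metric.infDist x {y : EuclideanSpace ℝ (Fin d) | ⟪u i, y⟫ = b i} ≤ δ}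
      = volume (Prod.mk b ⁻¹' S) := by
    intro b
    congr 1
    ext x
    constructor
    · rintro ⟨h1, i, h2⟩
      exact ⟨h1, i, by rwa [infDist_hyperplane (u i) (hu i)] at h2⟩
    · rintro ⟨h1, i, h2⟩
      exact ⟨h1, i, by rwa [infDist_hyperplane (u i) (hu i)]⟩
  rw [lintegral_congr hcongr]
  have hrepr : ∀ b : Fin N → ℝ, volume (Prod.mk b ⁻¹' S)
      = ∫⁻ x, S.indicator 1 (b, x) := by
    intro b
    rw [← lintegral_indicator_one (hS.preimage measurable_prodMk_left)]
    exact lintegral_congr fun x => by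
      by_cases h : (b, x) ∈ S <;> simp [Set.indicator_apply, h]
  rw [lintegral_congr hrepr]
  have hswap := lintegral_lintegral_swap (μ := μ)
    (ν := (volume : Measure (EuclideanSpace ℝ (Fin d))))
    (f := fun b x => S.indicator 1 (b, x))
    ((measurable_one.indicator hS).aemeasurable)
  rw [hswap]
  have hrepr2 : ∀ x : EuclideanSpace ℝ (Fin d),
      (∫⁻ b, S.indicator 1 (b, x) ∂μ) = μ {b | (b, x) ∈ S} := by
    intro x
    have hm : MeasurableSet {b : Fin N → ℝ | (b, x) ∈ S} :=
      hS.preimage measurable_prodMk_right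
    rw [← lintegral_indicator_one hm]
    exact lintegral_congr fun b => by
      by_cases h : (b, x) ∈ S <;> simp [Set.indicator_apply, h]
  rw [lintegral_congr hrepr2]
  -- pointwise lower bound on the closed ball
  have key : ∀ x ∈ Metric.closedBall (0 : EuclideanSpace ℝ (Fin d)) R,
      ENNReal.ofReal (1 - Real.exp (-(N * δ / (2 * R)))) ≤ μ {b | (b, x) ∈ S} := by
    intro x hx
    have hxR : ‖x‖ ≤ R := by
      rw [Metric.mem_closedBall, dist_zero_right] at hx; exact hx
    set c : Fin N → ℝ := fun i => ⟪u i, x⟫ with hc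
    have hseteq : {b : Fin N → ℝ | (b, x) ∈ S} = {b | ∃ i, |c i - b i| ≤ δ} := by
      ext b
      simp only [hSdef, Set.mem_setOf_eq, hc, hxR, true_and]
    rw [hseteq]
    set A : Set (Fin N → ℝ) := {b | ∃ i, |c i - b i| ≤ δ} with hA
    have hAm : MeasurableSet A := by
      have : A = ⋃ i, {b : Fin N → ℝ | |c i - b i| ≤ δ} := by
        ext b; simp [hA, Set.mem_iUnion]
      rw [this]
      exact MeasurableSet.iUnion fun i =>
        measurableSet_le ((measurable_const.sub (measurable_pi_apply i)).abs) measurable_const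
    have hAc : Aᶜ = Set.pi Set.univ (fun i => {t : ℝ | δ < |c i - t|}) := by
      ext b
      simp [hA, Set.mem_pi, not_le]
    have hcompl_le : μ Aᶜ ≤ ENNReal.ofReal (Real.exp (-(N * δ / (2 * R)))) := by
      rw [hAc, hμ, Measure.pi_pi]
      have hbase : (0:ℝ) ≤ 1 - δ / (2 * R) := by
        have : δ / (2 * R) ≤ 1 := by
          rw [div_le_one h2R]; linarith
        linarith
      calc (∏ i : Fin N, μ1 {t : ℝ | δ < |c i - t|})
          ≤ ∏ _i : Fin N, ENNReal.ofReal (1 - δ / (2 * R)) := by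
            refine Finset.prod_le_prod' fun i _ => ?_
            refine slab_measure_le hR hδ hδR (c i) ?_
            calc |c i| = |⟪u i, x⟫| := rfl
              _ ≤ ‖u i‖ * ‖x‖ := abs_real_inner_le_norm _ _
              _ = ‖x‖ := by rw [hu i, one_mul]
              _ ≤ R := hxR
        _ = ENNReal.ofReal (1 - δ / (2 * R)) ^ N := by
            rw [Finset.prod_const, Finset.card_univ, Fintype.card_fin]
        _ = ENNReal.ofReal ((1 - δ / (2 * R)) ^ N) := by
            rw [ENNReal.ofReal_pow hbase]
        _ ≤ ENNReal.ofReal (Real.exp (-(δ / (2 * R))) ^ N) := by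
            apply ENNReal.ofReal_le_ofReal
            apply pow_le_pow_left₀ hbase
            have := Real.add_one_le_exp (-(δ / (2 * R)))
            linarith
        _ = ENNReal.ofReal (Real.exp (-(N * δ / (2 * R)))) := by
            rw [← Real.exp_nat_mul]
            congr 1
            ring
    have hsum : μ A + μ Aᶜ = 1 := by
      rw [measure_add_measure_compl hAm, measure_univ]
    have h1 : ENNReal.ofReal (1 - Real.exp (-(N * δ / (2 * R))))
        = 1 - ENNReal.ofReal (Real.exp (-(N * δ / (2 * R)))) := by
      rw [ENNReal.ofReal_sub _ (Real.exp_nonneg _), ENNReal.ofReal_one]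
    rw [h1]
    calc (1 : ENNReal) - ENNReal.ofReal (Real.exp (-(N * δ / (2 * R))))
        ≤ 1 - μ Aᶜ := tsub_le_tsub_left hcompl_le _
      _ ≤ μ A := by
          rw [tsub_le_iff_right]
          rw [← hsum]
  calc volume (Metric.ball (0 : EuclideanSpace ℝ (Fin d)) 1) * ENNReal.ofReal (R ^ d) *
        ENNReal.ofReal (1 - Real.exp (-(N * δ / (2 * R))))
      = ENNReal.ofReal (1 - Real.exp (-(N * δ / (2 * R)))) *
          volume (Metric.closedBall (0 : EuclideanSpace ℝ (Fin d)) R) := by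
        rw [Measure.addHaar_closedBall _ _ hR.le, finrank_euclideanSpace_fin]
        ring
    _ = ∫⁻ _x in Metric.closedBall (0 : EuclideanSpace ℝ (Fin d)) R,
          ENNReal.ofReal (1 - Real.exp (-(N * δ / (2 * R)))) ∂volume := by
        rw [setLIntegral_const]
    _ ≤ ∫⁻ x in Metric.closedBall (0 : EuclideanSpace ℝ (Fin d)) R,
          μ {b | (b, x) ∈ S} ∂volume := by
        exact setLIntegral_mono' measurableSet_closedBall key
    _ ≤ ∫⁻ x, μ {b | (b, x) ∈ S} ∂volume := setLIntegral_le_lintegral _ _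
end

section
/- Let ε > 0, let f : ℝ → ℝ, and suppose there are m triples a_j < m_j < c_j with m_j = (a_j + c_j)/2, the intervals (a_j, c_j) pairwise disjoint, and |f(m_j) − (f(a_j) + f(c_j))/2| > 2ε for every j = 1, …, m. Then any function g of the form g(x) = c + a·x + ∑_{i=1}^N a_i · max(0, x − b_i) satisfying |f(x) − g(x)| ≤ ε at all the points a_j, m_j, c_j must have at least one breakpoint b_i in each open interval (a_j, c_j); in particular N ≥ m. -/
/-- If `f` has `m` disjoint midpoint triples `a_j < m_j < c_j` on which it
deviates from affinity by more than `2ε`, then any one-hidden-layer ReLU network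
`g x = c + a·x + ∑ i, A i * max 0 (x - b i)` that is `ε`-accurate at all the
points `a_j, m_j, c_j` must have a breakpoint in each interval `(a_j, c_j)`;
in particular it has at least `m` breakpoints. -/
theorem midpoint_deviation_forces_breakpoints
    (ε : ℝ) (hε : 0 < ε) (f : ℝ → ℝ) (m N : ℕ)
    (a' m' c' : Fin m → ℝ)
    (h_lt₁ : ∀ j, a' j < m' j) (h_lt₂ : ∀ j, m' j < c' j)
    (h_mid : ∀ j, m' j = (a' j + c' j) / 2)
    (h_disj : ∀ j k, j ≠ k → Disjoint (Set.Ioo (a' j) (c' j)) (Set.Ioo (a' k) (c' k)))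
    (h_dev : ∀ j, 2 * ε < |f (m' j) - (f (a' j) + f (c' j)) / 2|)
    (c a : ℝ) (A : Fin N → ℝ) (b : Fin N → ℝ)
    (g : ℝ → ℝ) (hg : g = fun x => c + a * x + ∑ i, A i * max 0 (x - b i))
    (h_approx : ∀ j, |f (a' j) - g (a' j)| ≤ ε ∧ |f (m' j) - g (m' j)| ≤ ε ∧
      |f (c' j) - g (c' j)| ≤ ε) :
    (∀ j, ∃ i, b i ∈ Set.Ioo (a' j) (c' j)) ∧ m ≤ N := by
  subst hg
  have key : ∀ j, ∃ i, b i ∈ Set.Ioo (a' j) (c' j) := by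
    intro j
    by_contra h
    push_neg at h
    have hm1 := h_lt₁ j
    have hm2 := h_lt₂ j
    have hmid := h_mid j
    have hterm : ∀ i, 2 * (A i * max 0 (m' j - b i))
        = A i * max 0 (a' j - b i) + A i * max 0 (c' j - b i) := by
      intro i
      rcases le_or_gt (b i) (a' j) with hb | hb
      · have h1 : max 0 (a' j - b i) = a' j - b i := max_eq_right (by linarith)
        have h2 : max 0 (m' j - b i) = m' j - b i := max_eq_right (by linarith)
        have h3 : max 0 (c' j - b i) = c' j - b i := max_eq_right (by linarith)
        rw [h1, h2, h3, hmid]; ring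
      · have hbc : c' j ≤ b i := by
          by_contra hc
          exact h i ⟨hb, lt_of_not_ge hc⟩
        have h1 : max 0 (a' j - b i) = 0 := max_eq_left (by linarith)
        have h2 : max 0 (m' j - b i) = 0 := max_eq_left (by linarith)
        have h3 : max 0 (c' j - b i) = 0 := max_eq_left (by linarith)
        rw [h1, h2, h3]; ring
    have hsum : 2 * (∑ i, A i * max 0 (m' j - b i))
        = (∑ i, A i * max 0 (a' j - b i)) + ∑ i, A i * max 0 (c' j - b i) := by
      rw [Finset.mul_sum, ← Finset.sum_add_distrib]
      exact Finset.sum_congr rfl fun i _ => hterm i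
    obtain ⟨h1, h2, h3⟩ := h_approx j
    have hdev := h_dev j
    simp only at h1 h2 h3
    rw [abs_le] at h1 h2 h3
    have ha2 : 2 * (a * m' j) = a * a' j + a * c' j := by rw [hmid]; ring
    rcases abs_cases (f (m' j) - (f (a' j) + f (c' j)) / 2) with ⟨heq, _⟩ | ⟨heq, _⟩ <;>
      rw [heq] at hdev <;>
      linarith [h1.1, h1.2, h2.1, h2.2, h3.1, h3.2, ha2]
  refine ⟨key, ?_⟩
  have : Function.Injective (fun j => Classical.choose (key j)) := by
    intro j k hjk
    simp only at hjk
    by_contra hne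
    have hj := Classical.choose_spec (key j)
    have hk := Classical.choose_spec (key k)
    rw [hjk] at hj
    exact Set.disjoint_left.mp (h_disj j k hne) hj hk
  simpa using Fintype.card_le_of_injective _ this
end

section
/- Let T(x) = 1 − |2x − 1| and let T^[L] be its L-fold composition. If g is any function of the form g(x) = c + a·x + ∑_{i=1}^N a_i · max(0, x − b_i) satisfying |T^[L](x) − g(x)| ≤ 1/4 for all x ∈ [0, 1], then N ≥ 2^{L−1}. -/
/-- Values of the iterated tent map at dyadic rationals. -/
lemma tent_iter_dyadic (T : ℝ → ℝ) (hT : T = fun x => 1 - |2 * x - 1|) :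
    ∀ m : ℕ, ∀ k : ℕ, k ≤ 2 ^ m →
      T^[m] ((k : ℝ) / 2 ^ m) = if k % 2 = 0 then 0 else 1 := by
  intro m
  induction m with
  | zero =>
      intro k hk
      interval_cases k <;> simp
  | succ m ih =>
      intro k hk
      rw [Function.iterate_succ_apply]
      by_cases hcase : k ≤ 2 ^ m
      · have hx : T ((k : ℝ) / 2 ^ (m + 1)) = (k : ℝ) / 2 ^ m := by
          rw [hT]
          simp only
          have h1 : (2 : ℝ) * ((k : ℝ) / 2 ^ (m + 1)) - 1 = (k : ℝ) / 2 ^ m - 1 := by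
            rw [pow_succ]
            field_simp
          rw [h1, abs_of_nonpos, ]
          · ring
          · have hk' : (k : ℝ) ≤ 2 ^ m := by exact_mod_cast hcase
            have hp : (0 : ℝ) < 2 ^ m := by positivity
            rw [sub_nonpos, div_le_one hp]
            exact hk'
        rw [hx]
        exact ih k hcase
      · push_neg at hcase
        set k' := 2 ^ (m + 1) - k with hk'def
        have hk'le : k' ≤ 2 ^ m := by
          have : 2 ^ (m + 1) = 2 * 2 ^ m := by ring
          omega
        have hkcast : ((k' : ℕ) : ℝ) = 2 ^ (m + 1) - (k : ℝ) := by
          have : (k : ℕ) ≤ 2 ^ (m + 1) := hk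
          push_cast [hk'def, Nat.cast_sub this]
          ring
        have hx : T ((k : ℝ) / 2 ^ (m + 1)) = (k' : ℝ) / 2 ^ m := by
          rw [hT]
          simp only
          have h1 : (2 : ℝ) * ((k : ℝ) / 2 ^ (m + 1)) - 1 = (k : ℝ) / 2 ^ m - 1 := by
            rw [pow_succ]
            field_simp
          rw [h1, abs_of_nonneg]
          · rw [hkcast, pow_succ]
            have hp : (2 : ℝ) ^ m ≠ 0 := by positivity
            field_simp
            ring
          · have hk' : (2 : ℝ) ^ m ≤ (k : ℝ) := by exact_mod_cast hcase.le
            have hp : (0 : ℝ) < 2 ^ m := by positivity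
            rw [sub_nonneg, le_div_iff₀ hp]
            linarith
        rw [hx, ih k' hk'le]
        have hmod : 2 ^ (m + 1) % 2 = 0 := by
          simp [pow_succ, Nat.mul_mod]
        have : k' % 2 = k % 2 := by omega
        rw [this]

/-- A shallow ReLU network with no breakpoint strictly between `u` and `w`
satisfies the midpoint identity on `[u, w]`. -/
lemma relu_midpoint (N : ℕ) (c a : ℝ) (A b : Fin N → ℝ) (u w : ℝ) (huw : u ≤ w)
    (hb : ∀ i, b i ≤ u ∨ w ≤ b i) :
    (c + a * ((u + w) / 2) + ∑ i, A i * max 0 ((u + w) / 2 - b i))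
      = ((c + a * u + ∑ i, A i * max 0 (u - b i))
        + (c + a * w + ∑ i, A i * max 0 (w - b i))) / 2 := by
  have key : ∀ i, A i * max 0 ((u + w) / 2 - b i)
      = (A i * max 0 (u - b i) + A i * max 0 (w - b i)) / 2 := by
    intro i
    rcases hb i with h | h
    · rw [max_eq_right (by linarith), max_eq_right (by linarith), max_eq_right (by linarith)]
      ring
    · rw [max_eq_left (by linarith), max_eq_left (by linarith), max_eq_left (by linarith)]
      ring
  have hsum : ∑ i, A i * max 0 ((u + w) / 2 - b i)
      = (∑ i, A i * max 0 (u - b i) + ∑ i, A i * max 0 (w - b i)) / 2 := by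
    rw [← Finset.sum_add_distrib, Finset.sum_div]
    exact Finset.sum_congr rfl fun i _ => key i
  rw [hsum]
  ring

/-- Any one-hidden-layer ReLU network (with skip/affine term) that uniformly
approximates the `L`-fold iterate of the tent map `T x = 1 − |2x − 1|` on
`[0, 1]` to accuracy `1/4` must have at least `2^(L-1)` neurons. -/
theorem tent_iterate_shallow_approximation_lower_bound
    (T : ℝ → ℝ) (hT : T = fun x => 1 - |2 * x - 1|)
    (L : ℕ) (hL : 1 ≤ L) (N : ℕ) (c a : ℝ) (A b : Fin N → ℝ)
    (g : ℝ → ℝ) (hg : g = fun x => c + a * x + ∑ i, A i * max 0 (x - b i))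
    (happrox : ∀ x ∈ Set.Icc (0 : ℝ) 1, |T^[L] x - g x| ≤ 1 / 4) :
    2 ^ (L - 1) ≤ N := by
  have hP : (0 : ℝ) < 2 ^ L := by positivity
  have hLsplit : 2 ^ L = 2 * 2 ^ (L - 1) := by
    rcases Nat.exists_eq_add_of_le hL with ⟨m, hm⟩
    subst hm
    simp [pow_succ]
    ring
  -- value and approximation facts at dyadic points
  have hval := tent_iter_dyadic T hT L
  have hmem : ∀ j : ℕ, j ≤ 2 ^ L → ((j : ℝ) / 2 ^ L) ∈ Set.Icc (0 : ℝ) 1 := by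
    intro j hj
    constructor
    · positivity
    · rw [div_le_one hP]
      exact_mod_cast hj
  have hglow : ∀ j : ℕ, j ≤ 2 ^ L → j % 2 = 0 → g ((j : ℝ) / 2 ^ L) ≤ 1 / 4 := by
    intro j hj hpar
    have h := happrox _ (hmem j hj)
    rw [hval j hj, if_pos hpar] at h
    rw [abs_le] at h
    linarith [h.1]
  have hghigh : ∀ j : ℕ, j ≤ 2 ^ L → j % 2 = 1 → 3 / 4 ≤ g ((j : ℝ) / 2 ^ L) := by
    intro j hj hpar
    have h := happrox _ (hmem j hj)
    rw [hval j hj, if_neg (by omega)] at h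
    rw [abs_le] at h
    linarith [h.2]
  -- each interval ((2t)/2^L, (2t+2)/2^L) with t < 2^(L-1) contains a breakpoint
  have hbp : ∀ t : Fin (2 ^ (L - 1)), ∃ i : Fin N,
      ((2 * (t : ℕ) : ℝ) / 2 ^ L < b i ∧ b i < ((2 * (t : ℕ) + 2 : ℝ)) / 2 ^ L) := by
    intro t
    by_contra hcon
    push_neg at hcon
    have ht : (t : ℕ) < 2 ^ (L - 1) := t.isLt
    have hj2 : 2 * (t : ℕ) + 2 ≤ 2 ^ L := by omega
    have hj1 : 2 * (t : ℕ) + 1 ≤ 2 ^ L := by omega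
    have hj0 : 2 * (t : ℕ) ≤ 2 ^ L := by omega
    set u : ℝ := (2 * (t : ℕ) : ℝ) / 2 ^ L with hu
    set w : ℝ := ((2 * (t : ℕ) + 2 : ℝ)) / 2 ^ L with hw
    have huw : u ≤ w := by
      rw [hu, hw, div_le_div_iff₀ hP hP]
      nlinarith [hP]
    have hbnot : ∀ i, b i ≤ u ∨ w ≤ b i := by
      intro i
      by_contra hc
      push_neg at hc
      exact absurd (hcon i hc.1) (not_le.mpr hc.2)
    have hmidpt : ((2 * (t : ℕ) + 1 : ℕ) : ℝ) / 2 ^ L = (u + w) / 2 := by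
      rw [hu, hw]
      push_cast
      ring
    have hkey : g ((u + w) / 2) = (g u + g w) / 2 := by
      rw [hg]
      exact relu_midpoint N c a A b u w huw hbnot
    have h1 : 3 / 4 ≤ g ((u + w) / 2) := by
      rw [← hmidpt]
      exact hghigh (2 * (t : ℕ) + 1) hj1 (by omega)
    have h2 : g u ≤ 1 / 4 := by
      have := hglow (2 * (t : ℕ)) hj0 (by omega)
      rw [hu]
      push_cast at this ⊢
      exact this
    have h3 : g w ≤ 1 / 4 := by
      have := hglow (2 * (t : ℕ) + 2) hj2 (by omega)
      rw [hw]
      push_cast at this ⊢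
      exact this
    rw [hkey] at h1
    linarith
  choose F hF using hbp
  have hinj : Function.Injective F := by
    intro s t hst
    by_contra hne
    have hs := hF s
    have ht := hF t
    rw [hst] at hs
    rcases Ne.lt_or_gt (fun h : (s : ℕ) = (t : ℕ) => hne (Fin.ext h)) with h | h
    · have : ((2 * (s : ℕ) + 2 : ℝ)) / 2 ^ L ≤ (2 * (t : ℕ) : ℝ) / 2 ^ L := by
        rw [div_le_div_iff₀ hP hP]
        have : (2 * (s : ℕ) + 2 : ℝ) ≤ (2 * (t : ℕ) : ℝ) := by
          exact_mod_cast by omega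
        nlinarith [hP]
      linarith [hs.2, ht.1]
    · have : ((2 * (t : ℕ) + 2 : ℝ)) / 2 ^ L ≤ (2 * (s : ℕ) : ℝ) / 2 ^ L := by
        rw [div_le_div_iff₀ hP hP]
        have : (2 * (t : ℕ) + 2 : ℝ) ≤ (2 * (s : ℕ) : ℝ) := by
          exact_mod_cast by omega
        nlinarith [hP]
      linarith [ht.2, hs.1]
  have := Fintype.card_le_of_injective F hinj
  simpa using this
end
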